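/- Let γ > 0, and set Q(z) = e^{-1/z}·z/(1−z) and K(z) = (1/γ)·e^{1/z}·(2 − 2/z + 1/z²). For every 0 < b < 1, ∫_ε^b Q(z)K(z) dz → +∞ as ε → 0⁺, and for every 0 < a < 1, ∫_a^v Q(z)K(z) dz → +∞ as v → 1⁻; i.e., Q·K is integrable on no neighborhood of 0 or of 1 inside (0,1). -/

import Mathlib

open MeasureTheory

noncomputable def Qhet (z : ℝ) : ℝ := Real.exp (-1 / z) * z / (1 - z)

noncomputable def Khet (γ z : ℝ) : ℝ :=
  (1 / γ) * Real.exp (1 / z) * (2 - 2 / z + 1 / z ^ 2)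

noncomputable def Fhet (γ z : ℝ) : ℝ :=
  (1 / γ) * (-2 * z + Real.log z - Real.log (1 - z))

noncomputable def ghet (γ z : ℝ) : ℝ := (1 / γ) * (-2 + 1 / z + 1 / (1 - z))

lemma QK_eq {γ : ℝ} (hγ : γ ≠ 0) {z : ℝ} (hz : z ∈ Set.Ioo (0:ℝ) 1) :
    Qhet z * Khet γ z = ghet γ z := by
  obtain ⟨h0, h1⟩ := hz
  have hz0 : z ≠ 0 := ne_of_gt h0
  have h1z : (1 : ℝ) - z ≠ 0 := sub_ne_zero.mpr (ne_of_gt h1)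
  unfold Qhet Khet ghet
  rw [show (-1 : ℝ)/z = -(1/z) by ring, Real.exp_neg]
  field_simp [Real.exp_ne_zero]
  ring

lemma hasDeriv_F {γ : ℝ} (hγ : γ ≠ 0) {z : ℝ} (hz : z ∈ Set.Ioo (0:ℝ) 1) :
    HasDerivAt (Fhet γ) (ghet γ z) z := by
  obtain ⟨h0, h1⟩ := hz
  have h1z : (0:ℝ) < 1 - z := by linarith
  have hlog : HasDerivAt Real.log z⁻¹ z := Real.hasDerivAt_log (ne_of_gt h0)
  have hsub : HasDerivAt (fun z : ℝ => 1 - z) (-1) z := by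
    simpa using (hasDerivAt_id z).const_sub 1
  have hlog2 : HasDerivAt (fun z : ℝ => Real.log (1 - z)) ((1-z)⁻¹ * (-1)) z :=
    (Real.hasDerivAt_log (ne_of_gt h1z)).comp z hsub
  have h2z : HasDerivAt (fun z : ℝ => -2 * z) (-2) z := by
    simpa using (hasDerivAt_id z).const_mul (-2)
  have h := ((h2z.add hlog).sub hlog2).const_mul (1/γ)
  unfold Fhet ghet
  convert h using 1
  · rfl
  · rfl
  · rfl
  · ring

lemma ghet_contOn {γ : ℝ} {u v : ℝ} (hu : 0 < u) (hv : v < 1) (huv : u ≤ v) :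
    ContinuousOn (ghet γ) (Set.uIcc u v) := by
  rw [Set.uIcc_of_le huv]
  apply ContinuousOn.mul continuousOn_const
  apply ContinuousOn.add
  · apply ContinuousOn.add continuousOn_const
    exact continuousOn_const.div continuousOn_id
      (fun x hx => ne_of_gt (lt_of_lt_of_le hu hx.1))
  · exact continuousOn_const.div (continuousOn_const.sub continuousOn_id)
      (fun x hx => sub_ne_zero.mpr (ne_of_gt (lt_of_le_of_lt hx.2 hv)))

lemma integral_QK {γ : ℝ} (hγ : γ ≠ 0) {u v : ℝ} (hu : 0 < u) (hv : v < 1) (huv : u ≤ v) :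
    (∫ z in u..v, Qhet z * Khet γ z) = Fhet γ v - Fhet γ u := by
  have hsub : Set.uIcc u v ⊆ Set.Ioo (0:ℝ) 1 := by
    rw [Set.uIcc_of_le huv]
    intro x hx; exact ⟨lt_of_lt_of_le hu hx.1, lt_of_le_of_lt hx.2 hv⟩
  rw [intervalIntegral.integral_congr (fun x hx => QK_eq hγ (hsub hx))]
  exact intervalIntegral.integral_eq_sub_of_hasDerivAt
    (fun x hx => hasDeriv_F hγ (hsub hx))
    ((ghet_contOn hu hv huv).intervalIntegrable)

open Filter Topology in
lemma F_atZero {γ : ℝ} (hγ : 0 < γ) :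
    Tendsto (Fhet γ) (nhdsWithin 0 (Set.Ioi 0)) atBot := by
  have hlog : Tendsto Real.log (nhdsWithin 0 (Set.Ioi 0)) atBot :=
    Real.tendsto_log_nhdsGT_zero
  have hrest : Tendsto (fun ε : ℝ => -2 * ε - Real.log (1 - ε))
      (nhdsWithin 0 (Set.Ioi 0)) (nhds 0) := by
    have c : ContinuousAt (fun ε : ℝ => -2 * ε - Real.log (1 - ε)) 0 := by
      apply ContinuousAt.sub (continuousAt_const.mul continuousAt_id)
      exact (Real.continuousAt_log (by norm_num)).comp
        (continuousAt_const.sub continuousAt_id)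
    have h := c.tendsto.mono_left (nhdsWithin_le_nhds (s := Set.Ioi (0:ℝ)))
    simpa using h
  have hsum : Tendsto (fun ε : ℝ => (-2 * ε - Real.log (1 - ε)) + Real.log ε)
      (nhdsWithin 0 (Set.Ioi 0)) atBot := hrest.add_atBot hlog
  have := hsum.const_mul_atBot (show (0:ℝ) < 1/γ by positivity)
  refine this.congr (fun ε => ?_)
  unfold Fhet; ring

open Filter Topology in
lemma F_atOne {γ : ℝ} (hγ : 0 < γ) :
    Tendsto (Fhet γ) (nhdsWithin 1 (Set.Iio 1)) atTop := by
  have hmap : Tendsto (fun v : ℝ => 1 - v) (nhdsWithin 1 (Set.Iio 1))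
      (nhdsWithin 0 (Set.Ioi 0)) := by
    apply tendsto_nhdsWithin_of_tendsto_nhds_of_eventually_within
    · have c : ContinuousAt (fun v : ℝ => 1 - v) 1 := continuousAt_const.sub continuousAt_id
      simpa using c.tendsto.mono_left (nhdsWithin_le_nhds (s := Set.Iio (1:ℝ)))
    · filter_upwards [self_mem_nhdsWithin] with v hv
      simpa using sub_pos.mpr (Set.mem_Iio.mp hv)
  have hlog : Tendsto (fun v : ℝ => Real.log (1 - v)) (nhdsWithin 1 (Set.Iio 1)) atBot :=
    Real.tendsto_log_nhdsGT_zero.comp hmap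
  have hneg : Tendsto (fun v : ℝ => -Real.log (1 - v)) (nhdsWithin 1 (Set.Iio 1)) atTop :=
    tendsto_neg_atBot_atTop.comp hlog
  have hrest : Tendsto (fun v : ℝ => -2 * v + Real.log v)
      (nhdsWithin 1 (Set.Iio 1)) (nhds (-2)) := by
    have c : ContinuousAt (fun v : ℝ => -2 * v + Real.log v) 1 := by
      apply ContinuousAt.add (continuousAt_const.mul continuousAt_id)
      exact Real.continuousAt_log (by norm_num)
    have h := c.tendsto.mono_left (nhdsWithin_le_nhds (s := Set.Iio (1:ℝ)))
    simpa using h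
  have hsum : Tendsto (fun v : ℝ => (-2 * v + Real.log v) + -Real.log (1 - v))
      (nhdsWithin 1 (Set.Iio 1)) atTop := hrest.add_atTop hneg
  have := hsum.const_mul_atTop (show (0:ℝ) < 1/γ by positivity)
  refine this.congr (fun v => ?_)
  unfold Fhet; ring

/-- For heterodyne detection, R(0,b) = ∞ and R(a,1) = ∞: the integral of Q·K
diverges both at 0 and at 1, i.e. Q·K is integrable on no neighborhood of 0
or 1 inside (0,1). -/
theorem het_QK_diverges (γ : ℝ) (hγ : 0 < γ) :
    (∀ b : ℝ, 0 < b → b < 1 →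
      Filter.Tendsto (fun ε => ∫ z in ε..b, Qhet z * Khet γ z)
        (nhdsWithin 0 (Set.Ioi 0)) Filter.atTop ∧
      ¬ IntegrableOn (fun z => Qhet z * Khet γ z) (Set.Ioo 0 b)) ∧
    (∀ a : ℝ, 0 < a → a < 1 →
      Filter.Tendsto (fun v => ∫ z in a..v, Qhet z * Khet γ z)
        (nhdsWithin 1 (Set.Iio 1)) Filter.atTop ∧
      ¬ IntegrableOn (fun z => Qhet z * Khet γ z) (Set.Ioo a 1)) := by
  have hγ' : γ ≠ 0 := ne_of_gt hγ
  constructor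
  · intro b hb0 hb1
    have hmem : Set.Ioo (0:ℝ) b ∈ nhdsWithin 0 (Set.Ioi 0) :=
      Ioo_mem_nhdsGT_of_mem ⟨le_refl 0, hb0⟩
    have htend : Filter.Tendsto (fun ε => ∫ z in ε..b, Qhet z * Khet γ z)
        (nhdsWithin 0 (Set.Ioi 0)) Filter.atTop := by
      have h1 := Filter.tendsto_neg_atBot_atTop.comp (F_atZero (γ := γ) hγ)
      have h2 := Filter.tendsto_atTop_add_const_left _ (Fhet γ b) h1
      apply h2.congr'
      filter_upwards [hmem] with ε hε
      rw [integral_QK hγ' hε.1 hb1 hε.2.le]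
      simp [sub_eq_add_neg, Function.comp]
    refine ⟨htend, ?_⟩
    intro hInt
    set M := ∫ z in Set.Ioo (0:ℝ) b, |Qhet z * Khet γ z| with hM
    have hbd : ∀ᶠ ε in nhdsWithin 0 (Set.Ioi 0),
        (∫ z in ε..b, Qhet z * Khet γ z) ≤ M := by
      filter_upwards [hmem] with ε hε
      rw [intervalIntegral.integral_of_le hε.2.le, integral_Ioc_eq_integral_Ioo]
      have hsub : Set.Ioo ε b ⊆ Set.Ioo 0 b := Set.Ioo_subset_Ioo hε.1.le le_rfl
      calc (∫ z in Set.Ioo ε b, Qhet z * Khet γ z)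
          ≤ ∫ z in Set.Ioo ε b, |Qhet z * Khet γ z| :=
            integral_mono (hInt.mono_set hsub) ((hInt.mono_set hsub).abs)
              (fun x => le_abs_self _)
        _ ≤ M := setIntegral_mono_set hInt.abs
              (Filter.Eventually.of_forall fun x => abs_nonneg _)
              (HasSubset.Subset.eventuallyLE hsub)
    obtain ⟨ε, h1, h2⟩ :=
      ((htend.eventually (Filter.eventually_gt_atTop M)).and hbd).exists
    exact absurd h2 (not_le.mpr h1)
  · intro a ha0 ha1
    have hmem : Set.Ioo a (1:ℝ) ∈ nhdsWithin 1 (Set.Iio 1) :=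
      Ioo_mem_nhdsLT_of_mem ⟨ha1, le_refl 1⟩
    have htend : Filter.Tendsto (fun v => ∫ z in a..v, Qhet z * Khet γ z)
        (nhdsWithin 1 (Set.Iio 1)) Filter.atTop := by
      have h2 := Filter.tendsto_atTop_add_const_right _ (-(Fhet γ a)) (F_atOne (γ := γ) hγ)
      apply h2.congr'
      filter_upwards [hmem] with v hv
      rw [integral_QK hγ' ha0 hv.2 hv.1.le]
      ring
    refine ⟨htend, ?_⟩
    intro hInt
    set M := ∫ z in Set.Ioo a (1:ℝ), |Qhet z * Khet γ z| with hM
    have hbd : ∀ᶠ v in nhdsWithin 1 (Set.Iio 1),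
        (∫ z in a..v, Qhet z * Khet γ z) ≤ M := by
      filter_upwards [hmem] with v hv
      rw [intervalIntegral.integral_of_le hv.1.le, integral_Ioc_eq_integral_Ioo]
      have hsub : Set.Ioo a v ⊆ Set.Ioo a 1 := Set.Ioo_subset_Ioo le_rfl hv.2.le
      calc (∫ z in Set.Ioo a v, Qhet z * Khet γ z)
          ≤ ∫ z in Set.Ioo a v, |Qhet z * Khet γ z| :=
            integral_mono (hInt.mono_set hsub) ((hInt.mono_set hsub).abs)
              (fun x => le_abs_self _)
        _ ≤ M := setIntegral_mono_set hInt.abs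
              (Filter.Eventually.of_forall fun x => abs_nonneg _)
              (HasSubset.Subset.eventuallyLE hsub)
    obtain ⟨v, h1, h2⟩ :=
      ((htend.eventually (Filter.eventually_gt_atTop M)).and hbd).exists
    exact absurd h2 (not_le.mpr h1)
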